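/- arXiv:2112.14629 — 2 statements merged into one kernel-verified Lean document; each statement's English description precedes it below -/
import Mathlib

section
/- Let n ≥ 2 be an integer and let A be a Sierpiński set contained in the closed unit ball B(0,1) of the Euclidean space ℝⁿ. Then for every (n-1)-dimensional linear subspace K of ℝⁿ with orthogonal projection π : ℝⁿ → K, the image π[A] is a Sierpiński set in π[B(0,1)] (the closed unit ball of K): that is, π[A] is uncountable and meets every subset of π[B(0,1)] of (n-1)-dimensional Lebesgue measure zero in a countable set. -/
open MeasureTheory

/-- `S` is a Sierpiński set in a measure space: `S` is uncountable and meets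
every set of measure zero in a countable set. -/
def SierpinskiSet {Z : Type*} [MeasureSpace Z] (S : Set Z) : Prop :=
  ¬S.Countable ∧ ∀ N : Set Z, volume N = 0 → (S ∩ N).Countable

/-- `S` is a Sierpiński set in `Y`: `S` is uncountable and meets every subset
of `Y` of measure zero in a countable set. -/
def SierpinskiSetIn {Z : Type*} [MeasureSpace Z] (Y S : Set Z) : Prop :=
  ¬S.Countable ∧ ∀ N : Set Z, N ⊆ Y → volume N = 0 → (S ∩ N).Countable

theorem stmt14 (n : ℕ) (hn : 2 ≤ n)
    (A : Set (EuclideanSpace ℝ (Fin n)))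
    (hAsub : A ⊆ Metric.closedBall 0 1)
    (hASierp : SierpinskiSet A)
    (K : Submodule ℝ (EuclideanSpace ℝ (Fin n)))
    (hK : Module.finrank ℝ K = n - 1) :
    SierpinskiSetIn (⇑(K.orthogonalProjectionOnto) '' Metric.closedBall 0 1)
      (⇑(K.orthogonalProjectionOnto) '' A) := by
  classical
  have hfinE : Module.finrank ℝ (EuclideanSpace ℝ (Fin n)) = n := finrank_euclideanSpace_fin
  have hW : Module.finrank ℝ Kᗮ = 1 := by
    have h := K.finrank_add_finrank_orthogonal
    rw [hK, hfinE] at h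
    omega
  let bK : OrthonormalBasis (Fin (n - 1)) ℝ K := (stdOrthonormalBasis ℝ K).reindex (finCongr hK)
  let bW : OrthonormalBasis (Fin 1) ℝ Kᗮ := (stdOrthonormalBasis ℝ Kᗮ).reindex (finCongr hW)
  let v : Fin (n - 1) ⊕ Fin 1 → EuclideanSpace ℝ (Fin n) :=
    Sum.elim (fun i => (bK i : EuclideanSpace ℝ (Fin n)))
      (fun i => (bW i : EuclideanSpace ℝ (Fin n)))
  have hon : Orthonormal ℝ v := by
    rw [orthonormal_iff_ite]
    rintro (i | i) (j | j)
    · have := orthonormal_iff_ite.mp bK.orthonormal i j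
      simpa [v, Submodule.coe_inner] using this
    · have : inner ℝ (↑(bK i) : EuclideanSpace ℝ (Fin n)) (↑(bW j)) = (0 : ℝ) :=
        Submodule.inner_right_of_mem_orthogonal (bK i).2 (bW j).2
      simpa [v] using this
    · have : inner ℝ (↑(bW i) : EuclideanSpace ℝ (Fin n)) (↑(bK j)) = (0 : ℝ) :=
        Submodule.inner_left_of_mem_orthogonal (bK j).2 (bW i).2
      simpa [v] using this
    · have := orthonormal_iff_ite.mp bW.orthonormal i j
      simpa [v, Submodule.coe_inner] using this
  have hsp : ⊤ ≤ Submodule.span ℝ (Set.range v) := by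
    rw [show Set.range v = (Set.range fun i => (bK i : EuclideanSpace ℝ (Fin n))) ∪
        (Set.range fun i => (bW i : EuclideanSpace ℝ (Fin n))) from Set.Sum.elim_range _ _,
      Submodule.span_union]
    have h1 : Submodule.span ℝ (Set.range fun i => (bK i : EuclideanSpace ℝ (Fin n))) = K := by
      have h : (Set.range fun i => (bK i : EuclideanSpace ℝ (Fin n))) =
          K.subtype '' Set.range bK := by rw [← Set.range_comp]; rfl
      rw [h, Submodule.span_image, ← bK.coe_toBasis, bK.toBasis.span_eq,
        Submodule.map_subtype_top]
    have h2 : Submodule.span ℝ (Set.range fun i => (bW i : EuclideanSpace ℝ (Fin n))) = Kᗮ := by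
      have h : (Set.range fun i => (bW i : EuclideanSpace ℝ (Fin n))) =
          Kᗮ.subtype '' Set.range bW := by rw [← Set.range_comp]; rfl
      rw [h, Submodule.span_image, ← bW.coe_toBasis, bW.toBasis.span_eq,
        Submodule.map_subtype_top]
    rw [h1, h2, Submodule.sup_orthogonal_of_hasOrthogonalProjection]
  let b : OrthonormalBasis (Fin (n - 1) ⊕ Fin 1) ℝ (EuclideanSpace ℝ (Fin n)) :=
    OrthonormalBasis.mk hon hsp
  have hcoord : ∀ (x : EuclideanSpace ℝ (Fin n)) (i : Fin (n - 1)),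
      bK.repr ((K.orthogonalProjectionOnto) x) i = b.repr x (Sum.inl i) := by
    intro x i
    rw [bK.repr_apply_apply, b.repr_apply_apply]
    have hb : b (Sum.inl i) = (bK i : EuclideanSpace ℝ (Fin n)) := by
      rw [OrthonormalBasis.coe_mk]; rfl
    rw [hb]
    exact Submodule.inner_orthogonalProjectionOnto_eq_of_mem_left (bK i) x
  -- key measure-zero lemma
  have hnull : ∀ N : Set K, volume N = 0 →
      volume ((⇑(K.orthogonalProjectionOnto)) ⁻¹' N) = 0 := by
    intro N hN
    set S : Set (EuclideanSpace ℝ (Fin (n - 1))) := bK.repr.symm ⁻¹' N with hS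
    have hSnull : volume S = 0 :=
      bK.measurePreserving_repr_symm.quasiMeasurePreserving.preimage_null hN
    set S₂ : Set (Fin (n - 1) → ℝ) :=
      ((MeasurableEquiv.toLp 2 (Fin (n - 1) → ℝ)).symm).symm ⁻¹' S with hS₂
    have hS₂null : volume S₂ = 0 :=
      (MeasurePreserving.symm ((MeasurableEquiv.toLp 2 (Fin (n - 1) → ℝ)).symm)
        (EuclideanSpace.volume_preserving_symm_measurableEquiv_toLp
          (Fin (n - 1)))).quasiMeasurePreserving.preimage_null hSnull
    have hmp : MeasurePreserving
        (MeasurableEquiv.sumPiEquivProdPi (fun _ : Fin (n - 1) ⊕ Fin 1 => ℝ)) volume volume := by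
      have := MeasurePreserving.symm
        (MeasurableEquiv.sumPiEquivProdPi (fun _ : Fin (n - 1) ⊕ Fin 1 => ℝ)).symm
        (volume_measurePreserving_sumPiEquivProdPi_symm
          (fun _ : Fin (n - 1) ⊕ Fin 1 => ℝ))
      simpa using this
    set T : Set ((Fin (n - 1) ⊕ Fin 1) → ℝ) :=
      (MeasurableEquiv.sumPiEquivProdPi (fun _ : Fin (n - 1) ⊕ Fin 1 => ℝ)) ⁻¹'
        (S₂ ×ˢ (Set.univ : Set (Fin 1 → ℝ))) with hT
    have hTnull : volume T = 0 := by
      apply hmp.quasiMeasurePreserving.preimage_null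
      rw [Measure.volume_eq_prod, Measure.prod_prod, hS₂null, zero_mul]
    have hset : (⇑(K.orthogonalProjectionOnto)) ⁻¹' N =
        ⇑b.repr ⁻¹' (((MeasurableEquiv.toLp 2 (Fin (n - 1) ⊕ Fin 1 → ℝ)).symm) ⁻¹' T) := by
      ext x
      have hfst : ((MeasurableEquiv.sumPiEquivProdPi (fun _ : Fin (n - 1) ⊕ Fin 1 => ℝ))
          (((MeasurableEquiv.toLp 2 (Fin (n - 1) ⊕ Fin 1 → ℝ)).symm) (b.repr x))).1 =
          ((MeasurableEquiv.toLp 2 (Fin (n - 1) → ℝ)).symm)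
            (bK.repr ((K.orthogonalProjectionOnto) x)) := by
        funext i
        exact (hcoord x i).symm
      simp only [Set.mem_preimage, hT, Set.mem_prod, Set.mem_univ, and_true, hfst, hS₂, hS]
      rw [MeasurableEquiv.symm_apply_apply, LinearIsometryEquiv.symm_apply_apply]
    rw [hset]
    exact b.measurePreserving_repr.quasiMeasurePreserving.preimage_null
      ((EuclideanSpace.volume_preserving_symm_measurableEquiv_toLp
        (Fin (n - 1) ⊕ Fin 1)).quasiMeasurePreserving.preimage_null hTnull)
  have hsing : ∀ y : K, volume ({y} : Set K) = 0 := by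
    intro y
    have h1 : ({y} : Set K) = ⇑bK.repr ⁻¹' {bK.repr y} := by
      ext z; simp
    rw [h1]
    apply bK.measurePreserving_repr.quasiMeasurePreserving.preimage_null
    have h2 : ({bK.repr y} : Set (EuclideanSpace ℝ (Fin (n - 1)))) =
        ((MeasurableEquiv.toLp 2 (Fin (n - 1) → ℝ)).symm) ⁻¹'
          {((MeasurableEquiv.toLp 2 (Fin (n - 1) → ℝ)).symm) (bK.repr y)} := by
      ext z; simp; exact ((WithLp.ofLp_injective 2).eq_iff).symm
    rw [h2]
    apply (EuclideanSpace.volume_preserving_symm_measurableEquiv_toLp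
      (Fin (n - 1))).quasiMeasurePreserving.preimage_null
    haveI : Nonempty (Fin (n - 1)) := ⟨⟨0, by omega⟩⟩
    exact measure_singleton _
  constructor
  · intro hc
    have hcover : A ⊆ ⋃ y ∈ (⇑(K.orthogonalProjectionOnto) '' A),
        (A ∩ (⇑(K.orthogonalProjectionOnto)) ⁻¹' {y}) := by
      intro a ha
      exact Set.mem_biUnion ⟨a, ha, rfl⟩ ⟨ha, rfl⟩
    have hAc : A.Countable :=
      (hc.biUnion fun y _ => hASierp.2 _ (hnull {y} (hsing y))).mono hcover
    exact hASierp.1 hAc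
  · intro N _ hN
    have hsub : (⇑(K.orthogonalProjectionOnto) '' A) ∩ N ⊆
        ⇑(K.orthogonalProjectionOnto) '' (A ∩ (⇑(K.orthogonalProjectionOnto)) ⁻¹' N) := by
      rintro y ⟨⟨a, ha, rfl⟩, hyN⟩
      exact ⟨a, ⟨ha, hyN⟩, rfl⟩
    exact ((hASierp.2 _ (hnull N hN)).image _).mono hsub
end

section
/- Let X be a compact Polish space, let H(X) be the space of homeomorphisms of X onto itself with the compact-open topology, let G ⊆ H(X) be an uncountable G_δ subset of H(X), and let B ⊆ X be comeager in X. Then there exist a dense G_δ set W ⊆ X and a perfect set Q ⊆ G (perfect as a subset of the space H(X)) such that for every homeomorphism f ∈ Q one has W ⊆ f[B]. -/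
/-- A perfect set: nonempty, closed, with no isolated points. -/
def PerfectSet {X : Type*} [TopologicalSpace X] (P : Set X) : Prop :=
  Perfect P ∧ P.Nonempty

/-- The space of homeomorphisms of a compact Hausdorff space `X` onto itself:
the bijective continuous self-maps of `X`, as a subspace of `C(X, X)` with the
compact-open topology. -/
abbrev HomeoSpace (X : Type*) [TopologicalSpace X] : Type _ :=
  {f : C(X, X) // Function.Bijective ⇑f}

open Set Metric

lemma aux_condensation {α : Type*} [TopologicalSpace α] [SecondCountableTopology α]
    {S : Set α} (hS : ¬S.Countable) :
    ∃ S' : Set α, S'.Nonempty ∧ S' ⊆ S ∧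
      ∀ x ∈ S', ∀ U : Set α, IsOpen U → x ∈ U →
        ∃ y ∈ S' ∩ U, ∃ z ∈ S' ∩ U, y ≠ z := by
  classical
  set S' : Set α := {x ∈ S | ∀ U : Set α, IsOpen U → x ∈ U → ¬(S ∩ U).Countable} with hS'def
  obtain ⟨bB, hbc, hbne, hbasis⟩ := TopologicalSpace.exists_countable_basis α
  have hdiff : (S \ S').Countable := by
    have hsub : S \ S' ⊆ ⋃ U ∈ {U ∈ bB | (S ∩ U).Countable}, (S ∩ U) := by
      intro x hx
      obtain ⟨hxS, hxn⟩ := hx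
      simp only [hS'def, mem_setOf_eq, not_and, not_forall] at hxn
      obtain ⟨U, hUopen, hxU, hUc⟩ := hxn hxS
      have hUc' : (S ∩ U).Countable := not_not.mp hUc
      obtain ⟨V, hVb, hxV, hVU⟩ := hbasis.exists_subset_of_mem_open hxU hUopen
      exact mem_biUnion ⟨hVb, hUc'.mono (inter_subset_inter_right _ hVU)⟩ ⟨hxS, hxV⟩
    exact Countable.mono hsub
      (Countable.biUnion (hbc.mono (sep_subset _ _)) (fun U hU => hU.2))
  have hS'unc : ¬S'.Countable := by
    intro h
    exact hS (((hdiff.union h).mono (fun x hx => by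
      by_cases hx' : x ∈ S'
      · exact Or.inr hx'
      · exact Or.inl ⟨hx, hx'⟩)))
  have key : ∀ x ∈ S', ∀ U : Set α, IsOpen U → x ∈ U → ¬(S' ∩ U).Countable := by
    intro x hx U hU hxU h
    exact hx.2 U hU hxU (((h.union hdiff).mono (fun y hy => by
      by_cases hy' : y ∈ S'
      · exact Or.inl ⟨hy', hy.2⟩
      · exact Or.inr ⟨hy.1, hy'⟩)))
  refine ⟨S', ?_, fun x hx => hx.1, ?_⟩
  · rcases S'.eq_empty_or_nonempty with h | h
    · exact absurd (h ▸ countable_empty) hS'unc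
    · exact h
  · intro x hx U hU hxU
    have h1 : ¬(S' ∩ U).Countable := key x hx U hU hxU
    have h2 : (S' ∩ U).Nontrivial := by
      by_contra h
      exact h1 ((not_nontrivial_iff.mp h).countable)
    obtain ⟨y, hy, z, hz, hyz⟩ := h2
    exact ⟨y, hy, z, hz, hyz⟩

set_option maxHeartbeats 1000000 in
theorem key {X : Type} [MetricSpace X] [CompactSpace X] [SecondCountableTopology X]
    [CompleteSpace X]
    (G : Set (HomeoSpace X)) (hGunc : ¬G.Countable) (hGδ : IsGδ G)
    (B : Set X) (hB : IsMeagre Bᶜ) :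
    ∃ W : Set X, Dense W ∧ IsGδ W ∧
      ∃ Q : Set (HomeoSpace X), Q ⊆ G ∧ (Perfect Q ∧ Q.Nonempty) ∧
        ∀ f ∈ Q, W ⊆ ⇑f.1 '' B := by
  classical
  -- X is nonempty
  rcases isEmpty_or_nonempty X with hX | hX
  · haveI : Subsingleton C(X, X) := ⟨fun f g => ContinuousMap.ext (fun x => (hX.false x).elim)⟩
    exact absurd ((Set.subsingleton_of_subsingleton (s := G)).countable) (by exact hGunc)
  -- The ambient Polish space P and the closed set Z of (map, inverse) pairs
  set P := C(X, X) × C(X, X) with hPdef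
  set Zset : Set P :=
    {p | p.1.comp p.2 = ContinuousMap.id X ∧ p.2.comp p.1 = ContinuousMap.id X} with hZdef
  have hZ12 : ∀ p ∈ Zset, ∀ x : X, p.1 (p.2 x) = x := by
    intro p hp x
    exact DFunLike.congr_fun hp.1 x
  have hZ21 : ∀ p ∈ Zset, ∀ x : X, p.2 (p.1 x) = x := by
    intro p hp x
    exact DFunLike.congr_fun hp.2 x
  have hZbij : ∀ p ∈ Zset, Function.Bijective ⇑p.1 :=
    fun p hp => Function.bijective_iff_has_inverse.mpr ⟨⇑p.2, hZ21 p hp, hZ12 p hp⟩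
  have hZclosed : IsClosed Zset := by
    have hc1 : Continuous fun p : P => p.1.comp p.2 :=
      ContinuousMap.continuous_comp'.comp (continuous_snd.prodMk continuous_fst)
    have hc2 : Continuous fun p : P => p.2.comp p.1 :=
      ContinuousMap.continuous_comp'.comp (continuous_fst.prodMk continuous_snd)
    exact (isClosed_singleton.preimage hc1).inter (isClosed_singleton.preimage hc2)
  -- For p ∈ Zset, p.2 is an open-map homeomorphism; images of dense opens are dense open
  have hZhomeo : ∀ p ∈ Zset, ∀ D : Set X, IsOpen D → Dense D →
      (IsOpen {x | p.2 x ∈ D} ∧ Dense {x | p.2 x ∈ D}) := by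
    intro p hp D hDo hDd
    constructor
    · exact hDo.preimage p.2.continuous
    · -- {x | p.2 x ∈ D} = p.1 '' D
      have him : {x | p.2 x ∈ D} = ⇑p.1 '' D := by
        ext x
        constructor
        · intro hx
          exact ⟨p.2 x, hx, hZ12 p hp x⟩
        · rintro ⟨y, hy, rfl⟩
          simpa [hZ21 p hp y] using hy
      rw [him]
      have hopen : IsOpenMap ⇑p.1 := by
        intro U hU
        have : ⇑p.1 '' U = ⇑p.2 ⁻¹' U := by
          ext x
          constructor
          · rintro ⟨y, hy, rfl⟩; simpa [hZ21 p hp y] using hy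
          · intro hx; exact ⟨p.2 x, hx, hZ12 p hp x⟩
        rw [this]
        exact hU.preimage p.2.continuous
      have hsurj : Function.Surjective ⇑p.1 := (hZbij p hp).2
      exact hsurj.denseRange.dense_image p.1.continuous hDd
  -- the inverse of f ∈ HomeoSpace X as a continuous map
  -- the inverse of f ∈ HomeoSpace X as a continuous map
  have hinv : ∀ f : HomeoSpace X, ∃ g : C(X, X), (f.1, g) ∈ Zset := by
    intro f
    let e : X ≃ X := Equiv.ofBijective ⇑f.1 f.2
    let hhomeo : X ≃ₜ X := Continuous.homeoOfEquivCompactToT2 (f := e) f.1.continuous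
    refine ⟨⟨⇑hhomeo.symm, hhomeo.symm.continuous⟩, ?_, ?_⟩
    · exact ContinuousMap.ext fun x => hhomeo.apply_symm_apply x
    · exact ContinuousMap.ext fun x => hhomeo.symm_apply_apply x
  choose finv hfinv using hinv
  -- Represent G as a countable intersection of open sets pulled back from C(X,X)
  have hGrep : ∃ O : ℕ → Set C(X, X), (∀ n, IsOpen (O n)) ∧
      G = ⋂ n, (Subtype.val ⁻¹' (O n) : Set (HomeoSpace X)) := by
    obtain ⟨T, hTo, hTc, hTeq⟩ := hGδ
    have hT' : ∀ t ∈ insert Set.univ T, ∃ O : Set C(X, X), IsOpen O ∧ t = Subtype.val ⁻¹' O := by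
      intro t ht
      rcases ht with rfl | ht
      · exact ⟨Set.univ, isOpen_univ, by simp⟩
      · obtain ⟨O, hO, hOt⟩ := isOpen_induced_iff.mp (hTo t ht)
        exact ⟨O, hO, hOt.symm⟩
    obtain ⟨u, hu⟩ := (hTc.insert Set.univ).exists_eq_range (insert_nonempty _ _)
    choose O hOopen hOeq using hT'
    have hmem : ∀ n : ℕ, u n ∈ insert Set.univ T := by
      intro n; rw [hu]; exact mem_range_self n
    refine ⟨fun n => O (u n) (hmem n), fun n => hOopen _ _, ?_⟩
    have : G = ⋂₀ insert Set.univ T := by rw [sInter_insert, hTeq]; simp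
    rw [this, hu, sInter_range]
    exact iInter_congr fun n => hOeq _ _
  obtain ⟨O, hOopen, hOeq⟩ := hGrep
  -- Represent the closed set Zset as a countable intersection of opens
  have hZrep : ∃ Zo : ℕ → Set P, (∀ n, IsOpen (Zo n)) ∧ Zset = ⋂ n, Zo n := by
    obtain ⟨T, hTo, hTc, hTeq⟩ := hZclosed.isGδ
    have hT' := hTc.insert Set.univ
    obtain ⟨u, hu⟩ := hT'.exists_eq_range (insert_nonempty _ _)
    have hmem : ∀ n : ℕ, u n ∈ insert Set.univ T := by
      intro n; rw [hu]; exact mem_range_self n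
    refine ⟨u, fun n => ?_, ?_⟩
    · rcases hmem n with h | h
      · rw [h]; exact isOpen_univ
      · exact hTo _ h
    · have : Zset = ⋂₀ insert Set.univ T := by rw [sInter_insert, hTeq]; simp
      rw [this, hu, sInter_range]
  obtain ⟨Zo, hZoopen, hZoeq⟩ := hZrep
  -- The Gδ set Γ ⊆ P corresponding to G
  set V : ℕ → Set P := fun n => Zo n ∩ (Prod.fst ⁻¹' O n) with hVdef
  have hVopen : ∀ n, IsOpen (V n) := fun n =>
    (hZoopen n).inter ((hOopen n).preimage continuous_fst)
  set Γ : Set P := ⋂ n, V n with hΓdef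
  have hΓZ : Γ ⊆ Zset := by
    rw [hZoeq]
    exact fun p hp => mem_iInter.mpr fun n => (mem_iInter.mp hp n).1
  have hΓG : ∀ p (hp : p ∈ Γ), (⟨p.1, hZbij p (hΓZ hp)⟩ : HomeoSpace X) ∈ G := by
    intro p hp
    rw [hOeq]
    exact mem_iInter.mpr fun n => (mem_iInter.mp hp n).2
  have hGΓ : ∀ f ∈ G, (f.1, finv f) ∈ Γ := by
    intro f hf
    refine mem_iInter.mpr fun n => ⟨?_, ?_⟩
    · have := hfinv f
      rw [hZoeq] at this
      exact mem_iInter.mp this n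
    · rw [hOeq] at hf
      exact mem_iInter.mp hf n
  -- Γ is uncountable
  have hΓunc : ¬Γ.Countable := by
    intro h
    apply hGunc
    have hinj : Function.Injective (fun f : HomeoSpace X => (f.1, finv f)) := by
      intro f g hfg
      exact Subtype.ext (congrArg Prod.fst hfg)
    have : G ⊆ (fun f : HomeoSpace X => (f.1, finv f)) ⁻¹' Γ := fun f hf => hGΓ f hf
    exact ((h.preimage hinj).mono this)
  -- dense open sets D n with ⋂ D n ⊆ B
  have hDrep : ∃ D : ℕ → Set X, (∀ n, IsOpen (D n)) ∧ (∀ n, Dense (D n)) ∧ (⋂ n, D n) ⊆ B := by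
    have hBres : B ∈ residual X := by
      have := hB
      rw [IsMeagre, compl_compl] at this
      exact this
    obtain ⟨t, htB, htGδ, htd⟩ := mem_residual.mp hBres
    obtain ⟨T, hTo, hTc, hTeq⟩ := htGδ
    obtain ⟨u, hu⟩ := (hTc.insert Set.univ).exists_eq_range (insert_nonempty _ _)
    have hmem : ∀ n : ℕ, u n ∈ insert Set.univ T := by
      intro n; rw [hu]; exact mem_range_self n
    have hteq : t = ⋂ n, u n := by
      have : t = ⋂₀ insert Set.univ T := by rw [sInter_insert, hTeq]; simp
      rw [this, hu, sInter_range]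
    refine ⟨u, fun n => ?_, fun n => ?_, ?_⟩
    · rcases hmem n with h | h
      · rw [h]; exact isOpen_univ
      · exact hTo _ h
    · have : t ⊆ u n := by rw [hteq]; exact iInter_subset _ n
      exact htd.mono this
    · rw [← hteq]; exact htB
  obtain ⟨D, hDopen, hDdense, hDB⟩ := hDrep
  -- countable basis of nonempty open sets of X
  have hbrep : ∃ b : ℕ → Set X, (∀ k, IsOpen (b k)) ∧ (∀ k, (b k).Nonempty) ∧
      (∀ U : Set X, IsOpen U → U.Nonempty → ∃ k, b k ⊆ U) := by
    obtain ⟨bB, hbc, hbne, hbasis⟩ := TopologicalSpace.exists_countable_basis X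
    have hbBne : bB.Nonempty := by
      obtain ⟨x⟩ := hX
      obtain ⟨V, hVb, hxV, _⟩ := hbasis.exists_subset_of_mem_open (mem_univ x) isOpen_univ
      exact ⟨V, hVb⟩
    obtain ⟨u, hu⟩ := hbc.exists_eq_range hbBne
    have humem : ∀ k, u k ∈ bB := by intro k; rw [hu]; exact mem_range_self k
    refine ⟨u, fun k => hbasis.isOpen (humem k), fun k => ?_, ?_⟩
    · exact nonempty_iff_ne_empty.mpr (fun h => hbne (h ▸ humem k))
    · intro U hU ⟨x, hxU⟩
      obtain ⟨V, hVb, hxV, hVU⟩ := hbasis.exists_subset_of_mem_open hxU hU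
      rw [hu] at hVb
      obtain ⟨k, rfl⟩ := hVb
      exact ⟨k, hVU⟩
  obtain ⟨b, hbopen, hbne2, hbbasis⟩ := hbrep
  -- condensation points of Γ
  obtain ⟨Γs, hΓsne, hΓsΓ, hΓssplit⟩ := aux_condensation hΓunc
  -- The fusion step
  have step : ∀ (n : ℕ) (c : (Fin n → Bool) → P) (r : (Fin n → Bool) → ℝ),
      (∀ s, c s ∈ Γs) → (∀ s, 0 < r s) →
      (∀ s t, s ≠ t → Disjoint (closedBall (c s) (r s)) (closedBall (c t) (r t))) →
      ∃ (c' : (Fin (n+1) → Bool) → P) (r' : (Fin (n+1) → Bool) → ℝ) (x : X),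
        (∀ t, c' t ∈ Γs) ∧ (∀ t, 0 < r' t) ∧ (∀ t, r' t ≤ (1/2)^(n+1)) ∧
        (∀ t, closedBall (c' t) (r' t) ⊆ V (n+1)) ∧
        (∀ t t', t ≠ t' → Disjoint (closedBall (c' t) (r' t)) (closedBall (c' t') (r' t'))) ∧
        (∀ t, closedBall (c' t) (r' t) ⊆ ball (c (Fin.init t)) (r (Fin.init t))) ∧
        (x ∈ b (Nat.unpair n).1) ∧
        (∀ t, closedBall (c' t) (r' t) ⊆ {p : P | p.2 x ∈ D (Nat.unpair n).2}) := by
    intro n c r hcΓ hrpos hdisj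
    -- split each ball into two distinct condensation points
    have hsplit : ∀ s : Fin n → Bool, ∃ y z : P,
        (y ∈ Γs ∧ y ∈ ball (c s) (r s)) ∧ (z ∈ Γs ∧ z ∈ ball (c s) (r s)) ∧ y ≠ z := by
      intro s
      obtain ⟨y, hy, z, hz, hyz⟩ := hΓssplit (c s) (hcΓ s) (ball (c s) (r s)) isOpen_ball
        (mem_ball_self (hrpos s))
      exact ⟨y, z, ⟨hy.1, hy.2⟩, ⟨hz.1, hz.2⟩, hyz⟩
    choose y z hy hz hyz using hsplit
    set c' : (Fin (n+1) → Bool) → P :=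
      fun t => if t (Fin.last n) then y (Fin.init t) else z (Fin.init t) with hc'def
    have hc'Γ : ∀ t, c' t ∈ Γs := by
      intro t
      by_cases h : t (Fin.last n) <;> simp [hc'def, h, (hy _).1, (hz _).1]
    have hc'ball : ∀ t, c' t ∈ ball (c (Fin.init t)) (r (Fin.init t)) := by
      intro t
      by_cases h : t (Fin.last n) <;> simp [hc'def, h, (hy _).2, (hz _).2]
    have hc'inj : Function.Injective c' := by
      intro t t' h
      by_contra hne
      rcases eq_or_ne (Fin.init t) (Fin.init t') with hini | hini
      · have hlast : t (Fin.last n) ≠ t' (Fin.last n) := by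
          intro hl
          apply hne
          have h1 := Fin.snoc_init_self t
          have h2 := Fin.snoc_init_self t'
          rw [← h1, ← h2, hini, hl]
        cases h1 : t (Fin.last n) <;> cases h2 : t' (Fin.last n) <;>
          simp [h1, h2] at hlast <;>
          simp only [hc'def, h1, h2, if_true, if_false, hini] at h
        · exact hyz _ h.symm
        · exact hyz _ h
      · have hd := hdisj _ _ hini
        exact Set.disjoint_left.mp hd (ball_subset_closedBall (hc'ball t))
          (h ▸ ball_subset_closedBall (hc'ball t'))
    -- choose the point x
    have hEopen : ∀ t : Fin (n+1) → Bool, IsOpen {x | (c' t).2 x ∈ D (Nat.unpair n).2} ∧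
        Dense {x | (c' t).2 x ∈ D (Nat.unpair n).2} :=
      fun t => hZhomeo (c' t) (hΓZ (hΓsΓ (hc'Γ t))) _ (hDopen _) (hDdense _)
    have hEdense : Dense (⋂ t : Fin (n+1) → Bool, {x | (c' t).2 x ∈ D (Nat.unpair n).2}) :=
      dense_iInter_of_isOpen (fun t => (hEopen t).1) (fun t => (hEopen t).2)
    obtain ⟨x, hxb, hxE⟩ := hEdense.inter_open_nonempty (b (Nat.unpair n).1)
      (hbopen _) (hbne2 _)
    -- choose the radii
    set Ot : (Fin (n+1) → Bool) → Set P := fun t =>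
      ball (c (Fin.init t)) (r (Fin.init t)) ∩
        (V (n+1) ∩ {p : P | p.2 x ∈ D (Nat.unpair n).2}) with hOtdef
    have hOtopen : ∀ t, IsOpen (Ot t) := by
      intro t
      refine isOpen_ball.inter ((hVopen (n+1)).inter ?_)
      exact (hDopen _).preimage ((continuous_eval_const x).comp continuous_snd)
    have hOtmem : ∀ t, c' t ∈ Ot t := by
      intro t
      refine ⟨hc'ball t, ?_, ?_⟩
      · exact mem_iInter.mp (hΓsΓ (hc'Γ t)) (n+1)
      · exact mem_iInter.mp hxE t
    have hballs : ∀ t, ∃ ε > 0, closedBall (c' t) ε ⊆ Ot t := by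
      intro t
      obtain ⟨ε, hε, hsub⟩ :=
        (Metric.nhds_basis_closedBall.mem_iff).mp ((hOtopen t).mem_nhds (hOtmem t))
      exact ⟨ε, hε, hsub⟩
    choose ε hεpos hεsub using hballs
    have hδex : ∃ δ > 0, ∀ t t' : Fin (n+1) → Bool, t ≠ t' → δ ≤ dist (c' t) (c' t') := by
      obtain ⟨q0, hq0⟩ := Finite.exists_min (fun q : (Fin (n+1) → Bool) × (Fin (n+1) → Bool) =>
        if q.1 = q.2 then (1:ℝ) else dist (c' q.1) (c' q.2))
      refine ⟨min 1 (if q0.1 = q0.2 then (1:ℝ) else dist (c' q0.1) (c' q0.2)), ?_, ?_⟩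
      · rcases eq_or_ne q0.1 q0.2 with h | h
        · simp [h]
        · rw [if_neg h]
          exact lt_min one_pos (dist_pos.mpr fun hh => h (hc'inj hh))
      · intro t t' hne'
        have h1 := hq0 (t, t')
        rw [if_neg hne'] at h1
        exact le_trans (min_le_right _ _) h1
    obtain ⟨δ, hδpos, hδle⟩ := hδex
    set r' : (Fin (n+1) → Bool) → ℝ :=
      fun t => min (ε t) (min ((1/2)^(n+1)) (δ / 3)) with hr'def
    have hr'pos : ∀ t, 0 < r' t := by
      intro t
      exact lt_min (hεpos t) (lt_min (by positivity) (by linarith))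
    have hr'sub : ∀ t, closedBall (c' t) (r' t) ⊆ Ot t := by
      intro t
      exact (closedBall_subset_closedBall (min_le_left _ _)).trans (hεsub t)
    refine ⟨c', r', x, hc'Γ, hr'pos, ?_, ?_, ?_, ?_, hxb, ?_⟩
    · intro t
      exact le_trans (min_le_right _ _) (min_le_left _ _)
    · intro t
      exact (hr'sub t).trans (fun p hp => hp.2.1)
    · intro t t' hne
      rw [Set.disjoint_left]
      intro p hp hp'
      have h1 : dist (c' t) (c' t') ≤ r' t + r' t' :=
        calc dist (c' t) (c' t') ≤ dist (c' t) p + dist p (c' t') := dist_triangle _ _ _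
        _ ≤ r' t + r' t' := add_le_add (by rw [dist_comm]; exact mem_closedBall.mp hp)
            (mem_closedBall.mp hp')
      have h2 : δ ≤ dist (c' t) (c' t') := hδle t t' hne
      have h4 : r' t ≤ δ / 3 := le_trans (min_le_right _ _) (min_le_right _ _)
      have h5 : r' t' ≤ δ / 3 := le_trans (min_le_right _ _) (min_le_right _ _)
      linarith
    · intro t
      exact (hr'sub t).trans (fun p hp => hp.1)
    · intro t
      exact (hr'sub t).trans (fun p hp => hp.2.2)
  -- base stage
  obtain ⟨p0, hp0⟩ := hΓsne
  obtain ⟨ρ0, hρ0pos, hρ0sub⟩ : ∃ ρ > 0, closedBall p0 ρ ⊆ V 0 := by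
    obtain ⟨ρ, hρ, hsub⟩ := (Metric.nhds_basis_closedBall.mem_iff).mp
      ((hVopen 0).mem_nhds (mem_iInter.mp (hΓsΓ hp0) 0))
    exact ⟨ρ, hρ, hsub⟩
  let St : ℕ → Type := fun n => {cr : ((Fin n → Bool) → P) × ((Fin n → Bool) → ℝ) //
    (∀ s, cr.1 s ∈ Γs) ∧ (∀ s, 0 < cr.2 s) ∧ (∀ s, cr.2 s ≤ (1/2)^n) ∧
    (∀ s, closedBall (cr.1 s) (cr.2 s) ⊆ V n) ∧
    (∀ s t, s ≠ t → Disjoint (closedBall (cr.1 s) (cr.2 s)) (closedBall (cr.1 t) (cr.2 t)))}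
  have d0 : St 0 := ⟨(fun _ => p0, fun _ => min ρ0 1),
    fun _ => hp0, fun _ => lt_min hρ0pos one_pos,
    fun _ => by simpa using min_le_right ρ0 1,
    fun s => (closedBall_subset_closedBall (min_le_left _ _)).trans hρ0sub,
    fun s t hst => absurd (Subsingleton.elim s t) hst⟩
  have step'' : ∀ (n : ℕ) (d : St n), ∃ (e : St (n+1)) (x : X),
      (∀ t, closedBall (e.1.1 t) (e.1.2 t) ⊆ ball (d.1.1 (Fin.init t)) (d.1.2 (Fin.init t))) ∧
      x ∈ b (Nat.unpair n).1 ∧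
      (∀ t, closedBall (e.1.1 t) (e.1.2 t) ⊆ {p : P | p.2 x ∈ D (Nat.unpair n).2}) := by
    intro n d
    obtain ⟨c', r', x, h1, h2, h3, h4, h5, h6, h7, h8⟩ :=
      step n d.1.1 d.1.2 d.2.1 d.2.2.1 d.2.2.2.2.2
    exact ⟨⟨(c', r'), h1, h2, h3, h4, h5⟩, x, h6, h7, h8⟩
  choose F xF hFnest hFb hFD using step''
  let T : ∀ n, St n := fun n => Nat.rec d0 F n
  have hTsucc : ∀ n, T (n+1) = F n (T n) := fun _ => rfl
  set xs : ℕ → X := fun n => xF n (T n) with hxsdef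
  -- branches
  set cB : (ℕ → Bool) → ℕ → P := fun σ n => (T n).1.1 (fun i => σ i) with hcBdef
  set rB : (ℕ → Bool) → ℕ → ℝ := fun σ n => (T n).1.2 (fun i => σ i) with hrBdef
  have hrpos : ∀ σ n, 0 < rB σ n := fun σ n => (T n).2.2.1 _
  have hrle : ∀ σ n, rB σ n ≤ (1/2)^n := fun σ n => (T n).2.2.2.1 _
  have hVsub : ∀ σ n, closedBall (cB σ n) (rB σ n) ⊆ V n := fun σ n => (T n).2.2.2.2.1 _
  have hrestr : ∀ (σ : ℕ → Bool) (n : ℕ),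
      Fin.init (fun i : Fin (n+1) => σ i) = (fun i : Fin n => σ i) := by
    intro σ n; funext i; simp [Fin.init]
  have hnest : ∀ σ n, closedBall (cB σ (n+1)) (rB σ (n+1)) ⊆ ball (cB σ n) (rB σ n) := by
    intro σ n
    have h := hFnest n (T n) (fun i : Fin (n+1) => σ i)
    rw [hrestr σ n] at h
    exact h
  have hchain : ∀ σ n m, n ≤ m →
      closedBall (cB σ m) (rB σ m) ⊆ closedBall (cB σ n) (rB σ n) := by
    intro σ n m hnm
    induction m, hnm using Nat.le_induction with
    | base => exact subset_rfl
    | succ m hnm ih => exact ((hnest σ m).trans ball_subset_closedBall).trans ih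
  have hcmem : ∀ σ n m, n ≤ m → cB σ m ∈ closedBall (cB σ n) (rB σ n) :=
    fun σ n m hnm => hchain σ n m hnm (mem_closedBall_self (hrpos σ m).le)
  have hcauchy : ∀ σ, CauchySeq (cB σ) := by
    intro σ
    refine cauchySeq_of_le_geometric (1/2) 1 (by norm_num) (fun n => ?_)
    have h := hcmem σ n (n+1) (Nat.le_succ n)
    rw [mem_closedBall, dist_comm] at h
    calc dist (cB σ n) (cB σ (n+1)) ≤ rB σ n := h
    _ ≤ (1/2)^n := hrle σ n
    _ = 1 * (1/2)^n := (one_mul _).symm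
  have hglim : ∀ σ : ℕ → Bool, ∃ p : P, Filter.Tendsto (cB σ) Filter.atTop (nhds p) :=
    fun σ => cauchySeq_tendsto_of_complete (hcauchy σ)
  choose g hg using hglim
  have hgball : ∀ σ n, g σ ∈ closedBall (cB σ n) (rB σ n) := by
    intro σ n
    refine IsClosed.mem_of_tendsto Metric.isClosed_closedBall (hg σ) ?_
    filter_upwards [Filter.eventually_ge_atTop n] with m hm
    exact hcmem σ n m hm
  have hgΓ : ∀ σ, g σ ∈ Γ := fun σ => mem_iInter.mpr fun n => hVsub σ n (hgball σ n)
  have hgx : ∀ σ n, (g σ).2 (xs n) ∈ D (Nat.unpair n).2 := by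
    intro σ n
    have h := hFD n (T n) (fun i : Fin (n+1) => σ i)
    exact h (hgball σ (n+1))
  have hginj : Function.Injective g := by
    intro σ τ h
    by_contra hne
    obtain ⟨n1, hn1⟩ := Function.ne_iff.mp hne
    have hex : ∃ n, σ n ≠ τ n := ⟨n1, hn1⟩
    set n0 := Nat.find hex with hn0def
    have hlt : ∀ i, i < n0 → σ i = τ i := fun i hi => not_not.mp (Nat.find_min hex hi)
    have htne : (fun i : Fin (n0+1) => σ i) ≠ (fun i : Fin (n0+1) => τ i) := by
      intro he
      exact Nat.find_spec hex (congrFun he (Fin.last n0))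
    have hdisj' := (T (n0+1)).2.2.2.2.2 _ _ htne
    refine Set.disjoint_left.mp hdisj' (hgball σ (n0+1)) ?_
    rw [h]
    exact hgball τ (n0+1)
  have hmod : ∀ σ τ : ℕ → Bool, ∀ n, (∀ i, i < n → σ i = τ i) →
      dist (g σ) (g τ) ≤ 2 * (1/2)^n := by
    intro σ τ n hagree
    have heq : (fun i : Fin n => σ i) = (fun i : Fin n => τ i) := by
      funext i; exact hagree i i.2
    have hceq : cB σ n = cB τ n ∧ rB σ n = rB τ n := by
      constructor
      · simp only [hcBdef]; rw [heq]
      · simp only [hrBdef]; rw [heq]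
    have h1 := mem_closedBall.mp (hgball σ n)
    have h2 := mem_closedBall.mp (hgball τ n)
    rw [hceq.1, hceq.2] at h1
    calc dist (g σ) (g τ) ≤ dist (g σ) (cB τ n) + dist (cB τ n) (g τ) := dist_triangle _ _ _
    _ ≤ rB τ n + rB τ n := add_le_add h1 (by rw [dist_comm]; exact h2)
    _ ≤ (1/2)^n + (1/2)^n := add_le_add (hrle τ n) (hrle τ n)
    _ = 2 * (1/2)^n := by ring
  have hgcont : Continuous g := by
    rw [continuous_iff_continuousAt]
    intro σ
    refine Metric.tendsto_nhds.mpr (fun ε hε => ?_)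
    obtain ⟨n, hn⟩ : ∃ n : ℕ, 2 * (1/2)^n < ε := by
      obtain ⟨n, hn⟩ := exists_pow_lt_of_lt_one (by positivity : (0:ℝ) < ε/2)
        (by norm_num : (1:ℝ)/2 < 1)
      exact ⟨n, by linarith⟩
    have hNmem : {τ : ℕ → Bool | ∀ i : Fin n, τ i = σ i} ∈ nhds σ := by
      have hNopen : IsOpen {τ : ℕ → Bool | ∀ i : Fin n, τ i = σ i} := by
        have : {τ : ℕ → Bool | ∀ i : Fin n, τ i = σ i} =
            ⋂ i : Fin n, (fun τ : ℕ → Bool => τ i) ⁻¹' {σ i} := by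
          ext τ; simp
        rw [this]
        exact isOpen_iInter_of_finite fun i =>
          (isOpen_discrete _).preimage (continuous_apply (i : ℕ))
      exact hNopen.mem_nhds (fun i => rfl)
    filter_upwards [hNmem] with τ hτ
    have := hmod τ σ n (fun i hi => hτ ⟨i, hi⟩)
    calc dist (g τ) (g σ) ≤ 2 * (1/2)^n := this
    _ < ε := hn
  -- the perfect compact set Q' ⊆ Γ
  set Q' : Set P := Set.range g with hQ'def
  have hQ'Γ : Q' ⊆ Γ := by rintro p ⟨σ, rfl⟩; exact hgΓ σ
  have hQ'Z : Q' ⊆ Zset := fun p hp => hΓZ (hQ'Γ hp)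
  have hQ'cpt : IsCompact Q' := isCompact_range hgcont
  have hQ'acc : ∀ p ∈ Q', ∀ U ∈ nhds p, ∃ q, q ∈ U ∩ Q' ∧ q ≠ p := by
    rintro p ⟨σ, rfl⟩ U hU
    obtain ⟨ε, hεpos, hεsub⟩ := Metric.mem_nhds_iff.mp hU
    obtain ⟨n, hn⟩ : ∃ n : ℕ, 2 * (1/2)^n < ε := by
      obtain ⟨n, hn⟩ := exists_pow_lt_of_lt_one (by positivity : (0:ℝ) < ε/2)
        (by norm_num : (1:ℝ)/2 < 1)
      exact ⟨n, by linarith⟩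
    set τ : ℕ → Bool := fun i => if i = n then !(σ n) else σ i with hτdef
    have hτσ : τ ≠ σ := by
      intro h
      have := congrFun h n
      simp [hτdef] at this
    have hagree : ∀ i, i < n → τ i = σ i := by
      intro i hi
      simp [hτdef, Nat.ne_of_lt hi]
    refine ⟨g τ, ⟨hεsub ?_, ⟨τ, rfl⟩⟩, fun h => hτσ (hginj h)⟩
    exact Metric.mem_ball.mpr (lt_of_le_of_lt (hmod τ σ n hagree) hn)
  -- the dense Gδ set W
  have henvcont : Continuous (fun q : P × X => q.1.1 q.2) := by
    have h1 : Continuous fun q : P × X => ((q.1.1 : C(X,X)), q.2) :=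
      (continuous_fst.fst).prodMk continuous_snd
    exact ContinuousEval.continuous_eval.comp h1
  set K : ℕ → Set X := fun m => (fun q : P × X => q.1.1 q.2) '' (Q' ×ˢ (D m)ᶜ) with hKdef
  have hKclosed : ∀ m, IsClosed (K m) := fun m =>
    ((hQ'cpt.prod ((hDopen m).isClosed_compl.isCompact)).image henvcont).isClosed
  set W : Set X := ⋂ m, (K m)ᶜ with hWdef
  have hWD : ∀ x ∈ W, ∀ p ∈ Q', ∀ m, p.2 x ∈ D m := by
    intro x hx p hp m
    by_contra hmem
    exact (mem_iInter.mp hx m) ⟨(p, p.2 x), ⟨hp, hmem⟩, hZ12 p (hQ'Z hp) x⟩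
  have hWdense : Dense W := by
    refine dense_iInter_of_isOpen (fun m => (hKclosed m).isOpen_compl) (fun m => ?_)
    rw [dense_iff_inter_open]
    intro U hU hUne
    obtain ⟨k, hk⟩ := hbbasis U hU hUne
    refine ⟨xs (Nat.pair k m), hk ?_, ?_⟩
    · have := hFb (Nat.pair k m) (T (Nat.pair k m))
      rwa [Nat.unpair_pair] at this
    · intro hmem
      obtain ⟨⟨p, u⟩, ⟨hpQ, hu⟩, heq⟩ := hmem
      obtain ⟨σ, rfl⟩ := hpQ
      have h2 := hgx σ (Nat.pair k m)
      rw [Nat.unpair_pair] at h2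
      rw [← heq] at h2
      rw [hZ21 (g σ) (hQ'Z ⟨σ, rfl⟩) u] at h2
      exact hu h2
  have hWGδ : IsGδ W := IsGδ.iInter (fun m => ((hKclosed m).isOpen_compl).isGδ)
  -- the perfect set Q of homeomorphisms
  set Q : Set (HomeoSpace X) := {f | ∃ p ∈ Q', p.1 = f.1} with hQdef
  have hQG : Q ⊆ G := by
    rintro f ⟨p, hpQ', hpf⟩
    have h := hΓG p (hQ'Γ hpQ')
    have heq : (⟨p.1, hZbij p (hΓZ (hQ'Γ hpQ'))⟩ : HomeoSpace X) = f := Subtype.ext hpf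
    rwa [heq] at h
  have hQclosed : IsClosed Q := by
    have heq : Q = Subtype.val ⁻¹' (Prod.fst '' Q') := by
      ext f
      constructor
      · rintro ⟨p, hp, hpf⟩; exact ⟨p, hp, hpf⟩
      · rintro ⟨p, hp, hpf⟩; exact ⟨p, hp, hpf⟩
    rw [heq]
    exact ((hQ'cpt.image continuous_fst).isClosed).preimage continuous_subtype_val
  have hQpre : Preperfect Q := by
    intro f hf
    rw [accPt_iff_nhds]
    intro U hU
    obtain ⟨p, hpQ', hpf⟩ := hf
    rw [nhds_subtype_eq_comap] at hU
    obtain ⟨t, ht, hsub⟩ := Filter.mem_comap.mp hU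
    have hN : Prod.fst ⁻¹' t ∈ nhds p :=
      continuous_fst.continuousAt.preimage_mem_nhds (by rw [hpf]; exact ht)
    obtain ⟨q, ⟨hqt, hqQ'⟩, hqp⟩ := hQ'acc p hpQ' _ hN
    have hq1 : q.1 ≠ p.1 := by
      intro h
      apply hqp
      have hqZ := hQ'Z hqQ'
      have hpZ := hQ'Z hpQ'
      have h2 : q.2 = p.2 := by
        apply ContinuousMap.ext
        intro x
        calc q.2 x = q.2 (p.1 (p.2 x)) := by rw [hZ12 p hpZ x]
        _ = q.2 (q.1 (p.2 x)) := by rw [h]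
        _ = p.2 x := hZ21 q hqZ _
      exact Prod.ext h h2
    refine ⟨⟨q.1, hZbij q (hQ'Z hqQ')⟩, ⟨hsub hqt, ⟨q, hqQ', rfl⟩⟩, ?_⟩
    intro h
    exact hq1 (by rw [hpf]; exact congrArg Subtype.val h)
  have hQne : Q.Nonempty := by
    refine ⟨⟨(g (fun _ => false)).1, hZbij _ (hQ'Z ⟨(fun _ => false), rfl⟩)⟩,
      g (fun _ => false), ⟨(fun _ => false), rfl⟩, rfl⟩
  refine ⟨W, hWdense, hWGδ, Q, hQG, ⟨⟨hQclosed, hQpre⟩, hQne⟩, ?_⟩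
  rintro f ⟨p, hpQ', hpf⟩ x hx
  have hpZ := hQ'Z hpQ'
  have hmem : p.2 x ∈ B := hDB (mem_iInter.mpr (fun m => hWD x hx p hpQ' m))
  refine ⟨p.2 x, hmem, ?_⟩
  have hfin : p.1 (p.2 x) = x := hZ12 p hpZ x
  rw [hpf] at hfin
  exact hfin

theorem stmt15 {X : Type} [TopologicalSpace X] [PolishSpace X] [CompactSpace X]
    (G : Set (HomeoSpace X)) (hGunc : ¬G.Countable) (hGδ : IsGδ G)
    (B : Set X) (hB : IsMeagre Bᶜ) :
    ∃ W : Set X, Dense W ∧ IsGδ W ∧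
      ∃ Q : Set (HomeoSpace X), Q ⊆ G ∧ PerfectSet Q ∧
        ∀ f ∈ Q, W ⊆ ⇑f.1 '' B := by
  letI := TopologicalSpace.upgradeIsCompletelyMetrizable X
  obtain ⟨W, hW1, hW2, Q, hQ1, hQ2, hQ3⟩ := key G hGunc hGδ B hB
  exact ⟨W, hW1, hW2, Q, hQ1, hQ2, hQ3⟩
end
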